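/- The torus Lie algebra is a Lie algebra: let Γ be a free abelian group of finite rank equipped with an integer-valued skew-symmetric bilinear form ⟨·,·⟩, and let g = ⊕_{γ∈Γ} ℚ·e_γ with bracket [e_{γ₁}, e_{γ₂}] = (−1)^{⟨γ₁,γ₂⟩} ⟨γ₁,γ₂⟩ e_{γ₁+γ₂}. Then this bracket is antisymmetric and satisfies the Jacobi identity. -/

import Mathlib

/-- The bracket of the torus Lie algebra `g = ⊕_{γ∈Γ} ℚ·e_γ` (with `Γ = ℤ^k`),
defined on basis vectors by `[e_{γ₁}, e_{γ₂}] = (−1)^{⟨γ₁,γ₂⟩} ⟨γ₁,γ₂⟩ e_{γ₁+γ₂}`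
and extended bilinearly. -/
noncomputable def torusBracket {k : ℕ} (B : (Fin k → ℤ) → (Fin k → ℤ) → ℤ)
    (f g : (Fin k → ℤ) →₀ ℚ) : (Fin k → ℤ) →₀ ℚ :=
  f.sum fun γ₁ a => g.sum fun γ₂ b =>
    Finsupp.single (γ₁ + γ₂) (a * b * ((-1 : ℚ) ^ (B γ₁ γ₂) * (B γ₁ γ₂ : ℚ)))

section Aux
variable {k : ℕ} (B : (Fin k → ℤ) → (Fin k → ℤ) → ℤ)

noncomputable def torusC (γ₁ γ₂ : Fin k → ℤ) : ℚ :=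
  (-1 : ℚ) ^ (B γ₁ γ₂) * (B γ₁ γ₂ : ℚ)

lemma neg_one_zpow_neg (n : ℤ) : (-1 : ℚ) ^ (-n) = (-1 : ℚ) ^ n := by
  rw [zpow_neg]
  refine inv_eq_of_mul_eq_one_right ?_
  rw [← mul_zpow, neg_mul_neg, one_mul, one_zpow]

lemma tb_single (γ₁ γ₂ : Fin k → ℤ) (a b : ℚ) :
    torusBracket B (Finsupp.single γ₁ a) (Finsupp.single γ₂ b) =
    Finsupp.single (γ₁ + γ₂) (a * b * torusC B γ₁ γ₂) := by
  unfold torusBracket torusC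
  rw [Finsupp.sum_single_index, Finsupp.sum_single_index]
  · simp
  · simp [Finsupp.sum_single_index]

lemma tb_zero_left (g : (Fin k → ℤ) →₀ ℚ) : torusBracket B 0 g = 0 :=
  Finsupp.sum_zero_index

lemma tb_zero_right (f : (Fin k → ℤ) →₀ ℚ) : torusBracket B f 0 = 0 := by
  unfold torusBracket
  simp [Finsupp.sum_zero_index]

lemma tb_add_left (f₁ f₂ g : (Fin k → ℤ) →₀ ℚ) :
    torusBracket B (f₁ + f₂) g = torusBracket B f₁ g + torusBracket B f₂ g := by
  unfold torusBracket
  rw [Finsupp.sum_add_index']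
  · intro γ; simp
  · intro γ a₁ a₂
    rw [← Finsupp.sum_add]
    congr 1; ext γ₂ b
    rw [← Finsupp.single_add]
    congr 1; ring

lemma tb_add_right (f g₁ g₂ : (Fin k → ℤ) →₀ ℚ) :
    torusBracket B f (g₁ + g₂) = torusBracket B f g₁ + torusBracket B f g₂ := by
  unfold torusBracket
  rw [← Finsupp.sum_add]
  congr 1; ext γ₁ a
  rw [Finsupp.sum_add_index']
  · intro γ; simp
  · intro γ b₁ b₂
    rw [← Finsupp.single_add]
    congr 1; ring

lemma torusC_skew (hskew : ∀ x y, B x y = - B y x) (γ₁ γ₂ : Fin k → ℤ) :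
    torusC B γ₂ γ₁ = - torusC B γ₁ γ₂ := by
  unfold torusC
  rw [hskew γ₂ γ₁, neg_one_zpow_neg]
  push_cast
  ring

lemma add3_helper {M : Type*} [AddCommGroup M] (x1 x2 y1 y2 z1 z2 : M)
    (h1 : x1 + y1 + z1 = 0) (h2 : x2 + y2 + z2 = 0) :
    x1 + x2 + (y1 + y2) + (z1 + z2) = 0 := by
  have e : x1 + x2 + (y1 + y2) + (z1 + z2) = (x1 + y1 + z1) + (x2 + y2 + z2) := by abel
  rw [e, h1, h2, add_zero]

end Aux

/-- The torus Lie algebra bracket is antisymmetric and satisfies the Jacobi identity. -/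
theorem torus_lie_algebra {k : ℕ} (B : (Fin k → ℤ) → (Fin k → ℤ) → ℤ)
    (hskew : ∀ x y, B x y = - B y x)
    (haddl : ∀ x y z, B (x + y) z = B x z + B y z)
    (haddr : ∀ x y z, B x (y + z) = B x y + B x z) :
    (∀ f g : (Fin k → ℤ) →₀ ℚ, torusBracket B f g = - torusBracket B g f) ∧
    (∀ f g h : (Fin k → ℤ) →₀ ℚ,
      torusBracket B f (torusBracket B g h) +
      torusBracket B g (torusBracket B h f) +
      torusBracket B h (torusBracket B f g) = 0) := by
  have hss : ∀ (γ₁ γ₂ : Fin k → ℤ) (a b : ℚ),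
      torusBracket B (Finsupp.single γ₁ a) (Finsupp.single γ₂ b) =
      - torusBracket B (Finsupp.single γ₂ b) (Finsupp.single γ₁ a) := by
    intro γ₁ γ₂ a b
    rw [tb_single, tb_single, torusC_skew B hskew γ₂ γ₁]
    rw [add_comm γ₂ γ₁, ← Finsupp.single_neg]
    congr 1; ring
  have hsg : ∀ (γ : Fin k → ℤ) (a : ℚ) (g : (Fin k → ℤ) →₀ ℚ),
      torusBracket B (Finsupp.single γ a) g = - torusBracket B g (Finsupp.single γ a) := by
    intro γ a g
    induction g using Finsupp.induction₂ with
    | zero => simp [tb_zero_left, tb_zero_right]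
    | add_single γ' a' g' _ _ ih' =>
      rw [tb_add_right, tb_add_left, ih', neg_add, hss]
  have anti : ∀ f g : (Fin k → ℤ) →₀ ℚ, torusBracket B f g = - torusBracket B g f := by
    intro f g
    induction f using Finsupp.induction₂ with
    | zero => simp [tb_zero_left, tb_zero_right]
    | add_single γ a f _ _ ih =>
      rw [tb_add_left, tb_add_right, ih, neg_add, hsg]
  refine ⟨anti, ?_⟩
  have key : ∀ (γ₁ γ₂ γ₃ : Fin k → ℤ) (a b c : ℚ),
      a * (b * c * torusC B γ₂ γ₃) * torusC B γ₁ (γ₂ + γ₃) +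
      (b * (c * a * torusC B γ₃ γ₁) * torusC B γ₂ (γ₃ + γ₁) +
      c * (a * b * torusC B γ₁ γ₂) * torusC B γ₃ (γ₁ + γ₂)) = 0 := by
    intro γ₁ γ₂ γ₃ a b c
    unfold torusC
    rw [haddr γ₁ γ₂ γ₃, haddr γ₂ γ₃ γ₁, haddr γ₃ γ₁ γ₂,
        hskew γ₁ γ₃, hskew γ₂ γ₁, hskew γ₃ γ₂]
    rw [zpow_add₀ (by norm_num : (-1:ℚ) ≠ 0), zpow_add₀ (by norm_num : (-1:ℚ) ≠ 0),
        zpow_add₀ (by norm_num : (-1:ℚ) ≠ 0),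
        neg_one_zpow_neg, neg_one_zpow_neg, neg_one_zpow_neg]
    push_cast
    ring
  have jsss : ∀ (γ₁ γ₂ γ₃ : Fin k → ℤ) (a b c : ℚ),
      torusBracket B (Finsupp.single γ₁ a)
        (torusBracket B (Finsupp.single γ₂ b) (Finsupp.single γ₃ c)) +
      torusBracket B (Finsupp.single γ₂ b)
        (torusBracket B (Finsupp.single γ₃ c) (Finsupp.single γ₁ a)) +
      torusBracket B (Finsupp.single γ₃ c)
        (torusBracket B (Finsupp.single γ₁ a) (Finsupp.single γ₂ b)) = 0 := by
    intro γ₁ γ₂ γ₃ a b c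
    rw [tb_single, tb_single, tb_single, tb_single, tb_single, tb_single]
    have e1 : γ₂ + (γ₃ + γ₁) = γ₁ + (γ₂ + γ₃) := by abel
    have e2 : γ₃ + (γ₁ + γ₂) = γ₁ + (γ₂ + γ₃) := by abel
    rw [e1, e2, add_assoc, ← Finsupp.single_add, ← Finsupp.single_add, key, Finsupp.single_zero]
  have jssh : ∀ (γ₁ γ₂ : Fin k → ℤ) (a b : ℚ) (h : (Fin k → ℤ) →₀ ℚ),
      torusBracket B (Finsupp.single γ₁ a) (torusBracket B (Finsupp.single γ₂ b) h) +
      torusBracket B (Finsupp.single γ₂ b) (torusBracket B h (Finsupp.single γ₁ a)) +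
      torusBracket B h (torusBracket B (Finsupp.single γ₁ a) (Finsupp.single γ₂ b)) = 0 := by
    intro γ₁ γ₂ a b h
    induction h using Finsupp.induction₂ with
    | zero => simp [tb_zero_left, tb_zero_right]
    | add_single γ c h' _ _ ih =>
      simp only [tb_add_left, tb_add_right]
      exact add3_helper _ _ _ _ _ _ ih (jsss γ₁ γ₂ γ a b c)
  have jsgh : ∀ (γ₁ : Fin k → ℤ) (a : ℚ) (g h : (Fin k → ℤ) →₀ ℚ),
      torusBracket B (Finsupp.single γ₁ a) (torusBracket B g h) +
      torusBracket B g (torusBracket B h (Finsupp.single γ₁ a)) +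
      torusBracket B h (torusBracket B (Finsupp.single γ₁ a) g) = 0 := by
    intro γ₁ a g h
    induction g using Finsupp.induction₂ with
    | zero => simp [tb_zero_left, tb_zero_right]
    | add_single γ b g' _ _ ih =>
      simp only [tb_add_left, tb_add_right]
      exact add3_helper _ _ _ _ _ _ ih (jssh γ₁ γ a b h)
  intro f g h
  induction f using Finsupp.induction₂ with
  | zero => simp [tb_zero_left, tb_zero_right]
  | add_single γ a f' _ _ ih =>
    simp only [tb_add_left, tb_add_right]
    exact add3_helper _ _ _ _ _ _ ih (jsgh γ a g h)
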